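/- Let σ : X* → M be a choice of generators for a right cancellative monoid M. Then no two distinct vertices of the loop automaton Γ̂_σ(M) are equivalent: for distinct p, q ∈ M the cones (sets of words labelling paths to the identity/terminal vertex) of p and q differ. Consequently Γ̂_σ(M) is the minimal automaton of L_σ(M). -/

import Mathlib

open FreeMonoid

section LoopPrelude

variable {X M : Type*} [Monoid M]

def barW {X : Type*} (w : List (X ⊕ X)) : List (X ⊕ X) := (w.map Sum.swap).reverse

def posW {X : Type*} (u : List X) : List (X ⊕ X) := u.map Sum.inl

def negW {X : Type*} (v : List X) : List (X ⊕ X) := (v.map Sum.inr).reverse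

inductive LStep (σ : FreeMonoid X →* M) : M → (X ⊕ X) → M → Prop
  | posW (a : M) (x : X) : LStep σ a (Sum.inl x) (a * σ (of x))
  | negW (a : M) (x : X) : LStep σ (a * σ (of x)) (Sum.inr x) a

inductive LPath (σ : FreeMonoid X →* M) : M → List (X ⊕ X) → M → Prop
  | nil (a : M) : LPath σ a [] a
  | cons {a b c : M} {l : X ⊕ X} {w : List (X ⊕ X)}
      (h₁ : LStep σ a l b) (h₂ : LPath σ b w c) : LPath σ a (l :: w) c

def LoopProblem (σ : FreeMonoid X →* M) : Set (List (X ⊕ X)) := { w | LPath σ 1 w 1 }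

end LoopPrelude

section SemiPrelude

variable {X S : Type*} [Semigroup S]

def SLoopProblem (f : X → S) : Set (List (X ⊕ X)) :=
  LoopProblem (FreeMonoid.lift (fun x => (f x : WithOne S)))

end SemiPrelude

section Aux

variable {X M : Type*} [Monoid M] {σ : FreeMonoid X →* M}

lemma LPath.append {a b c : M} {w w' : List (X ⊕ X)}
    (h : LPath σ a w b) (h' : LPath σ b w' c) : LPath σ a (w ++ w') c := by
  induction h with
  | nil => simpa
  | cons h₁ _ ih => exact LPath.cons h₁ (ih h')

lemma LPath.split {a c : M} {w w' : List (X ⊕ X)}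
    (h : LPath σ a (w ++ w') c) : ∃ b, LPath σ a w b ∧ LPath σ b w' c := by
  induction w generalizing a with
  | nil => exact ⟨a, LPath.nil a, h⟩
  | cons l t ih =>
    cases h with
    | cons h₁ h₂ =>
      obtain ⟨b, hb1, hb2⟩ := ih h₂
      exact ⟨b, LPath.cons h₁ hb1, hb2⟩

lemma lpath_pos (u : List X) (a : M) :
    LPath σ a (posW u) (a * σ (FreeMonoid.ofList u)) := by
  induction u generalizing a with
  | nil => simpa [posW] using LPath.nil a
  | cons x t ih =>
    have h1 : LStep σ a (Sum.inl x) (a * σ (FreeMonoid.of x)) := LStep.posW a x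
    have h2 := ih (a * σ (FreeMonoid.of x))
    have : FreeMonoid.ofList (x :: t) = FreeMonoid.of x * FreeMonoid.ofList t := rfl
    rw [this, map_mul, ← mul_assoc]
    exact LPath.cons h1 h2

lemma lpath_neg (u : List X) (b : M) :
    LPath σ (b * σ (FreeMonoid.ofList u)) (negW u) b := by
  induction u generalizing b with
  | nil => simpa [negW] using LPath.nil b
  | cons x t ih =>
    have h2 := ih (b * σ (FreeMonoid.of x))
    have h1 : LStep σ (b * σ (FreeMonoid.of x)) (Sum.inr x) b := LStep.negW b x
    have hw : negW (x :: t) = negW t ++ [Sum.inr x] := by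
      simp [negW]
    have hm : FreeMonoid.ofList (x :: t) = FreeMonoid.of x * FreeMonoid.ofList t := rfl
    rw [hw, hm, map_mul, ← mul_assoc]
    exact LPath.append h2 (LPath.cons h1 (LPath.nil b))

lemma lpath_neg_eq (u : List X) {a c : M}
    (h : LPath σ a (negW u) c) : a = c * σ (FreeMonoid.ofList u) := by
  induction u generalizing a c with
  | nil => cases h; simp
  | cons x t ih =>
    have hw : negW (x :: t) = negW t ++ [Sum.inr x] := by simp [negW]
    rw [hw] at h
    obtain ⟨b, hb1, hb2⟩ := LPath.split h
    cases hb2 with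
    | cons h₁ h₂ =>
      cases h₂
      cases h₁ with
      | negW =>
        have := ih hb1
        rw [this]
        have hm : FreeMonoid.ofList (x :: t) = FreeMonoid.of x * FreeMonoid.ofList t := rfl
        rw [hm, map_mul, mul_assoc]

lemma lstep_inr {p q : M} {x : X} (h : LStep σ p (Sum.inr x) q) :
    p = q * σ (FreeMonoid.of x) := by cases h; rfl

end Aux

theorem loop_automaton_minimal {X M : Type*} [Monoid M] [IsRightCancelMul M]
    (σ : FreeMonoid X →* M) (hσ : Function.Surjective σ) :
    (∀ p : M, (∃ w : List (X ⊕ X), LPath σ 1 w p) ∧ ∃ w : List (X ⊕ X), LPath σ p w 1) ∧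
    (∀ (p : M) (a : X ⊕ X) (q r : M), LStep σ p a q → LStep σ p a r → q = r) ∧
    ∀ p q : M, {w : List (X ⊕ X) | LPath σ p w 1} = {w | LPath σ q w 1} → p = q := by
  refine ⟨?_, ?_, ?_⟩
  · intro p
    obtain ⟨u, hu⟩ := hσ p
    refine ⟨⟨posW u.toList, ?_⟩, ⟨negW u.toList, ?_⟩⟩
    · have := lpath_pos (σ := σ) u.toList 1
      simpa [hu] using this
    · have := lpath_neg (σ := σ) u.toList 1
      simpa [hu] using this
  · intro p a q r h1 h2
    cases h1 with
    | posW => cases h2; rfl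
    | negW b x =>
      have h2' := lstep_inr h2
      exact mul_right_cancel h2'
  · intro p q h
    obtain ⟨u, hu⟩ := hσ p
    have hp : LPath σ p (negW u.toList) 1 := by
      have := lpath_neg (σ := σ) u.toList 1
      simpa [hu] using this
    have hq : LPath σ q (negW u.toList) 1 := by
      have : negW u.toList ∈ {w : List (X ⊕ X) | LPath σ p w 1} := hp
      rw [h] at this
      exact this
    have := lpath_neg_eq u.toList hq
    simp only [FreeMonoid.ofList_toList, hu] at this
    rw [this, one_mul]
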